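/- Let P be a real polynomial of degree q ≥ 1 with positive leading coefficient, for each sufficiently large integer n let N(n) be the greatest positive integer i such that P(i) ≤ n, and let f : ℝ → ℝ be a bounded continuous function. Then lim_{n→∞} (1/N(n)) Σ_{i=1}^{N(n)} f(P(i)/n) = ∫_0^1 f(u^q) du. -/

import Mathlib

open Filter Topology Polynomial MeasureTheory

lemma poly_eval_bound (Q : Polynomial ℝ) (d : ℕ) (hd : Q.natDegree ≤ d) (x : ℝ) (hx : 1 ≤ x) :
    |Q.eval x| ≤ (∑ k ∈ Finset.range (d + 1), |Q.coeff k|) * x ^ d := by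
  have h0 : (0:ℝ) ≤ x := le_trans zero_le_one hx
  rw [Polynomial.eval_eq_sum_range' (lt_of_le_of_lt hd (Nat.lt_succ_self d)) x]
  calc |∑ k ∈ Finset.range (d + 1), Q.coeff k * x ^ k|
      ≤ ∑ k ∈ Finset.range (d + 1), |Q.coeff k * x ^ k| := Finset.abs_sum_le_sum_abs _ _
    _ ≤ ∑ k ∈ Finset.range (d + 1), |Q.coeff k| * x ^ d := by
        apply Finset.sum_le_sum
        intro k hk
        rw [abs_mul, abs_pow, abs_of_nonneg h0]
        exact mul_le_mul_of_nonneg_left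
          (pow_le_pow_right₀ hx (Nat.lt_succ_iff.mp (Finset.mem_range.mp hk)))
          (abs_nonneg _)
    _ = (∑ k ∈ Finset.range (d + 1), |Q.coeff k|) * x ^ d := by rw [Finset.sum_mul]

lemma riemann_sum_tendsto (g : ℝ → ℝ) (hg : Continuous g) :
    Tendsto (fun m : ℕ => (1 / (m : ℝ)) * ∑ i ∈ Finset.Icc 1 m, g ((i : ℝ) / m))
      atTop (𝓝 (∫ u in Set.Icc (0 : ℝ) 1, g u)) := by
  have hI : (∫ u in Set.Icc (0:ℝ) 1, g u) = ∫ u in (0:ℝ)..1, g u := by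
    rw [intervalIntegral.integral_of_le zero_le_one,
      MeasureTheory.integral_Icc_eq_integral_Ioc]
  rw [hI, Metric.tendsto_nhds]
  intro ε hε
  obtain ⟨δ, hδ0, hδ⟩ := Metric.uniformContinuousOn_iff.mp
    ((isCompact_Icc : IsCompact (Set.Icc (0:ℝ) 1)).uniformContinuousOn_of_continuous
      hg.continuousOn) (ε/2) (by positivity)
  have h1 : ∀ᶠ m : ℕ in atTop, (1:ℝ)/m < δ :=
    tendsto_one_div_atTop_nhds_zero_nat.eventually (eventually_lt_nhds hδ0)
  filter_upwards [h1, eventually_ge_atTop 1] with m hm h1m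
  have hm0 : (0:ℝ) < m := by exact_mod_cast h1m
  set a : ℕ → ℝ := fun k => (k : ℝ) / m with ha
  have hint : ∀ k < m, IntervalIntegrable g volume (a k) (a (k+1)) :=
    fun k _ => hg.intervalIntegrable _ _
  have hsplit : ∑ k ∈ Finset.range m, ∫ x in a k..a (k+1), g x = ∫ x in (0:ℝ)..1, g x := by
    rw [intervalIntegral.sum_integral_adjacent_intervals hint]
    simp only [ha]
    norm_num
    rw [div_self (ne_of_gt hm0)]
  have hsum : ∑ i ∈ Finset.Icc 1 m, g ((i : ℝ) / m)
      = ∑ k ∈ Finset.range m, g (((k:ℝ) + 1) / m) := by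
    rw [show Finset.Icc 1 m = Finset.Ico 1 (m+1) by rw [Finset.Ico_add_one_right_eq_Icc],
      Finset.sum_Ico_eq_sum_range]
    simp only [Nat.add_sub_cancel]
    apply Finset.sum_congr rfl
    intro k _
    congr 2
    push_cast
    ring
  rw [Real.dist_eq, hsum, ← hsplit, Finset.mul_sum, ← Finset.sum_sub_distrib]
  have hterm : ∀ k ∈ Finset.range m,
      |1 / (m:ℝ) * g (((k:ℝ) + 1) / m) - ∫ x in a k..a (k+1), g x| ≤ ε/2 * (1/m) := by
    intro k hk
    have hkm : k < m := Finset.mem_range.mp hk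
    have hle : a k ≤ a (k+1) := by
      simp only [ha]
      gcongr
      push_cast; linarith
    have hc : (1 / (m:ℝ)) * g (((k:ℝ) + 1) / m)
        = ∫ _x in a k..a (k+1), g (((k:ℝ) + 1) / m) := by
      rw [intervalIntegral.integral_const, smul_eq_mul, ha]
      push_cast
      ring_nf
    rw [hc, ← intervalIntegral.integral_sub intervalIntegrable_const (hint k hkm)]
    have hdiff : a (k+1) - a k = 1/m := by simp only [ha]; push_cast; ring
    have hcmem : ((k:ℝ) + 1) / m ∈ Set.Icc (0:ℝ) 1 := by
      constructor
      · positivity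
      · rw [div_le_one hm0]
        have : (k:ℝ) + 1 ≤ m := by exact_mod_cast hkm
        linarith
    have key : ‖∫ x in a k..a (k+1), (g (((k:ℝ) + 1) / m) - g x)‖
        ≤ ε/2 * |a (k+1) - a k| := by
      apply intervalIntegral.norm_integral_le_of_norm_le_const
      intro x hx
      rw [Set.uIoc_of_le hle] at hx
      have hx0 : (0:ℝ) ≤ x := le_trans (by positivity) hx.1.le
      have hxm : x ∈ Set.Icc (0:ℝ) 1 := by
        refine ⟨hx0, le_trans hx.2 ?_⟩
        have : a (k+1) = ((k:ℝ)+1)/m := by simp only [ha]; push_cast; ring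
        rw [this]
        exact hcmem.2
      have hdist : dist (((k:ℝ) + 1) / m) x < δ := by
        rw [Real.dist_eq]
        have h1 : x ≤ ((k:ℝ)+1)/m := by
          have : a (k+1) = ((k:ℝ)+1)/m := by simp only [ha]; push_cast; ring
          rw [← this]; exact hx.2
        have h2 : ((k:ℝ)+1)/m - x < 1/m := by
          have : (k:ℝ)/m < x := hx.1
          have e : ((k:ℝ)+1)/m = (k:ℝ)/m + 1/m := by ring
          linarith [e ▸ h1]
        rw [abs_of_nonneg (by linarith)]
        linarith
      rw [Real.norm_eq_abs, ← Real.dist_eq]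
      exact (hδ _ hcmem _ hxm hdist).le
    rw [Real.norm_eq_abs, hdiff] at key
    rw [abs_of_nonneg (by positivity : (0:ℝ) ≤ 1/(m:ℝ))] at key
    exact key
  calc |∑ k ∈ Finset.range m,
        (1 / (m:ℝ) * g (((k:ℝ) + 1) / m) - ∫ x in a k..a (k+1), g x)|
      ≤ ∑ k ∈ Finset.range m,
        |1 / (m:ℝ) * g (((k:ℝ) + 1) / m) - ∫ x in a k..a (k+1), g x| :=
        Finset.abs_sum_le_sum_abs _ _
    _ ≤ ∑ _k ∈ Finset.range m, ε/2 * (1/m) := Finset.sum_le_sum hterm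
    _ = m * (ε/2 * (1/m)) := by rw [Finset.sum_const, Finset.card_range, nsmul_eq_mul]
    _ = ε/2 := by field_simp
    _ < ε := by linarith

lemma tendsto_eval_div_lead (P : Polynomial ℝ) (ha0 : 0 < P.leadingCoeff) (hq1 : 1 ≤ P.natDegree) :
    Tendsto (fun x : ℝ => P.eval x / (P.leadingCoeff * x ^ P.natDegree)) atTop (𝓝 1) := by
  have h := P.isEquivalent_atTop_lead
  rw [Asymptotics.isEquivalent_iff_tendsto_one ?_] at h
  · exact h.congr (fun x => rfl)
  · filter_upwards [eventually_gt_atTop (0:ℝ)] with x hx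
    positivity

lemma tendsto_eval_div_eval_succ (P : Polynomial ℝ) (ha0 : 0 < P.leadingCoeff)
    (hq1 : 1 ≤ P.natDegree) :
    Tendsto (fun x : ℝ => P.eval x / P.eval (x + 1)) atTop (𝓝 1) := by
  set a := P.leadingCoeff
  set q := P.natDegree
  have t1 := tendsto_eval_div_lead P ha0 hq1
  have t2 : Tendsto (fun x : ℝ => a * (x+1) ^ q / P.eval (x+1)) atTop (𝓝 1) := by
    have h := (t1.inv₀ one_ne_zero).comp (tendsto_atTop_add_const_right atTop 1 tendsto_id)
    rw [inv_one] at h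
    refine h.congr (fun x => ?_)
    simp only [Function.comp_apply, id_eq, inv_div]
    rfl
  have t3 : Tendsto (fun x : ℝ => (x / (x+1)) ^ q) atTop (𝓝 1) := by
    have hbase : Tendsto (fun x : ℝ => x / (x+1)) atTop (𝓝 1) := by
      have hinv : Tendsto (fun x : ℝ => (x+1)⁻¹) atTop (𝓝 0) :=
        tendsto_inv_atTop_zero.comp (tendsto_atTop_add_const_right atTop 1 tendsto_id)
      have h2 := (tendsto_const_nhds : Tendsto (fun _ : ℝ => (1:ℝ)) atTop (𝓝 1)).sub hinv
      rw [sub_zero] at h2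
      refine Tendsto.congr' ?_ h2
      filter_upwards [eventually_gt_atTop (0:ℝ)] with x hx
      field_simp
      ring
    have := hbase.pow q
    rwa [one_pow] at this
  have hPtop : Tendsto (fun x : ℝ => P.eval x) atTop atTop :=
    P.tendsto_atTop_of_leadingCoeff_nonneg
      (Polynomial.natDegree_pos_iff_degree_pos.mp hq1) ha0.le
  have hprod := (t1.mul t2).mul t3
  rw [mul_one, mul_one] at hprod
  refine Tendsto.congr' ?_ hprod
  have hP1 : Tendsto (fun x : ℝ => P.eval (x+1)) atTop atTop :=
    hPtop.comp (tendsto_atTop_add_const_right atTop 1 tendsto_id)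
  filter_upwards [eventually_gt_atTop (0:ℝ), hPtop.eventually_gt_atTop 0,
    hP1.eventually_gt_atTop 0] with x hx hPx hPx1
  have hx1 : (0:ℝ) < x + 1 := by linarith
  have ha : a ≠ 0 := ne_of_gt ha0
  simp only [a, q] at ha ⊢
  rw [div_pow]
  field_simp

/-- If `P` is a real polynomial of degree `q ≥ 1` with positive leading
coefficient, `N n` is (for all sufficiently large `n`) the greatest positive
integer `i` with `P(i) ≤ n`, and `f : ℝ → ℝ` is bounded continuous, then
`lim_{n→∞} (1/N(n)) Σ_{i=1}^{N(n)} f(P(i)/n) = ∫_0^1 f(u^q) du`. -/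
theorem tendsto_average_f_P_div_n
    (P : Polynomial ℝ) (q : ℕ) (hq : P.natDegree = q) (hq1 : 1 ≤ q)
    (ha0 : 0 < P.leadingCoeff)
    (N : ℕ → ℕ)
    (hN : ∀ᶠ n : ℕ in atTop,
      1 ≤ N n ∧ P.eval ((N n : ℝ)) ≤ (n : ℝ) ∧
        ∀ i : ℕ, 1 ≤ i → P.eval ((i : ℝ)) ≤ (n : ℝ) → i ≤ N n)
    (f : ℝ → ℝ) (hf : Continuous f) (hbd : ∃ M : ℝ, ∀ x : ℝ, |f x| ≤ M) :
    Tendsto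
      (fun n : ℕ =>
        (1 / (N n : ℝ)) * ∑ i ∈ Finset.Icc 1 (N n), f (P.eval ((i : ℝ)) / n))
      atTop (𝓝 (∫ u in Set.Icc (0 : ℝ) 1, f (u ^ q))) := by
  subst hq
  set a : ℝ := P.leadingCoeff with ha
  set q : ℕ := P.natDegree with hqdef
  have hPtop : Tendsto (fun x : ℝ => P.eval x) atTop atTop :=
    P.tendsto_atTop_of_leadingCoeff_nonneg
      (Polynomial.natDegree_pos_iff_degree_pos.mp hq1) ha0.le
  -- N tends to infinity
  have hNtop : Tendsto N atTop atTop := by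
    rw [tendsto_atTop]
    intro b
    have hev : ∀ᶠ n : ℕ in atTop, P.eval ((max b 1 : ℕ) : ℝ) ≤ (n : ℝ) :=
      tendsto_natCast_atTop_atTop.eventually (eventually_ge_atTop _)
    filter_upwards [hN, hev] with n hn hev'
    exact le_trans (le_max_left b 1) (hn.2.2 (max b 1) (le_max_right _ _) hev')
  have hNR : Tendsto (fun n => ((N n : ℕ) : ℝ)) atTop atTop :=
    tendsto_natCast_atTop_atTop.comp hNtop
  -- eventual positivity facts
  have hPN : ∀ᶠ n : ℕ in atTop, 0 < P.eval ((N n : ℝ)) :=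
    hNR.eventually (hPtop.eventually_gt_atTop 0)
  have hPN1 : ∀ᶠ n : ℕ in atTop, 0 < P.eval ((N n : ℝ) + 1) := by
    have h := (hPtop.comp (tendsto_atTop_add_const_right atTop 1 tendsto_id)).eventually_gt_atTop 0
    exact hNR.eventually h
  -- n < P(N n + 1)
  have hlt : ∀ᶠ n : ℕ in atTop, (n : ℝ) < P.eval ((N n : ℝ) + 1) := by
    filter_upwards [hN] with n hn
    by_contra h
    push_neg at h
    have h' : P.eval (((N n + 1 : ℕ) : ℝ)) ≤ (n : ℝ) := by push_cast; exact h
    have := hn.2.2 (N n + 1) (by omega) h'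
    omega
  -- h1 : P(N n)/n → 1
  have h1 : Tendsto (fun n : ℕ => P.eval ((N n : ℝ)) / (n : ℝ)) atTop (𝓝 1) := by
    have hlow : Tendsto (fun n : ℕ => P.eval ((N n : ℝ)) / P.eval ((N n : ℝ) + 1))
        atTop (𝓝 1) := (tendsto_eval_div_eval_succ P ha0 hq1).comp hNR
    refine tendsto_of_tendsto_of_tendsto_of_le_of_le' hlow tendsto_const_nhds ?_ ?_
    · filter_upwards [hN, hPN, hPN1, hlt, eventually_ge_atTop 1] with n hn hpn hpn1 hl h1n
      have hn0 : (0 : ℝ) < (n : ℝ) := by exact_mod_cast h1n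
      exact div_le_div_of_nonneg_left hpn.le hn0 hl.le
    · filter_upwards [hN, eventually_ge_atTop 1] with n hn h1n
      have hn0 : (0 : ℝ) < (n : ℝ) := by exact_mod_cast h1n
      exact (div_le_one hn0).mpr hn.2.1
  -- h2 : a N^q / n → 1
  have h2 : Tendsto (fun n : ℕ => a * (N n : ℝ) ^ q / (n : ℝ)) atTop (𝓝 1) := by
    have t1N : Tendsto (fun n : ℕ => P.eval ((N n : ℝ)) / (a * (N n : ℝ) ^ q))
        atTop (𝓝 1) := (tendsto_eval_div_lead P ha0 hq1).comp hNR
    have tinv := t1N.inv₀ one_ne_zero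
    rw [inv_one] at tinv
    have tinv' : Tendsto (fun n : ℕ => a * (N n : ℝ) ^ q / P.eval ((N n : ℝ)))
        atTop (𝓝 1) := by
      refine tinv.congr (fun n => ?_)
      rw [inv_div]
    have hmul := tinv'.mul h1
    rw [mul_one] at hmul
    refine Tendsto.congr' ?_ hmul
    filter_upwards [hPN, eventually_ge_atTop 1] with n hpn hn1
    have hn0 : (0 : ℝ) < (n : ℝ) := by exact_mod_cast hn1
    have hP0 := ne_of_gt hpn
    field_simp
  -- h3 : N^(q-1)/n → 0
  have h3 : Tendsto (fun n : ℕ => (N n : ℝ) ^ (q - 1) / (n : ℝ)) atTop (𝓝 0) := by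
    have hmulN : Tendsto (fun n : ℕ => a * (N n : ℝ)) atTop atTop :=
      hNR.const_mul_atTop ha0
    have hinv : Tendsto (fun n : ℕ => (a * (N n : ℝ))⁻¹) atTop (𝓝 0) :=
      hmulN.inv_tendsto_atTop
    have hmul := h2.mul hinv
    rw [one_mul] at hmul
    refine Tendsto.congr' ?_ hmul
    filter_upwards [hNtop.eventually_ge_atTop 1, eventually_ge_atTop 1] with n hNn hn1
    have hM0 : (0 : ℝ) < (N n : ℝ) := by exact_mod_cast hNn
    have hn0 : (0 : ℝ) < (n : ℝ) := by exact_mod_cast hn1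
    have hNq : ((N n : ℝ)) ^ (q - 1) * (N n : ℝ) = (N n : ℝ) ^ q := by
      rw [← pow_succ]
      congr 1
      omega
    field_simp
    rw [← hNq]
    ring
  -- coefficient bound for the lower-order part
  set c : ℝ := ∑ k ∈ Finset.range (q - 1 + 1), |P.eraseLead.coeff k| with hc
  have hc0 : 0 ≤ c := Finset.sum_nonneg fun _ _ => abs_nonneg _
  have hQbound : ∀ x : ℝ, 1 ≤ x → |P.eval x - a * x ^ q| ≤ c * x ^ (q - 1) := by
    intro x hx
    have heq : P.eval x - a * x ^ q = P.eraseLead.eval x := by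
      conv_rhs => rw [← Polynomial.self_sub_C_mul_X_pow]
      rw [Polynomial.eval_sub, Polynomial.eval_mul, Polynomial.eval_C,
        Polynomial.eval_pow, Polynomial.eval_X]
    rw [heq]
    exact poly_eval_bound _ _ (le_trans P.eraseLead_natDegree_le (by omega)) x hx
  -- the error sequence
  set E : ℕ → ℝ := fun n => c * ((N n : ℝ) ^ (q - 1) / (n : ℝ)) + |a * (N n : ℝ) ^ q / (n : ℝ) - 1|
    with hE
  have hEto0 : Tendsto E atTop (𝓝 0) := by
    have hA : Tendsto (fun n : ℕ => c * ((N n : ℝ) ^ (q - 1) / (n : ℝ))) atTop (𝓝 0) := by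
      have := h3.const_mul c
      rwa [mul_zero] at this
    have hB : Tendsto (fun n : ℕ => |a * (N n : ℝ) ^ q / (n : ℝ) - 1|) atTop (𝓝 0) := by
      have h := (h2.sub (tendsto_const_nhds : Tendsto (fun _ : ℕ => (1:ℝ)) atTop (𝓝 1))).abs
      rwa [sub_self, abs_zero] at h
    have := hA.add hB
    rwa [add_zero] at this
  -- key uniform estimate
  have hkey : ∀ᶠ n : ℕ in atTop, ∀ i ∈ Finset.Icc 1 (N n),
      |P.eval ((i : ℝ)) / (n : ℝ) - ((i : ℝ) / (N n : ℝ)) ^ q| ≤ E n := by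
    filter_upwards [hN, eventually_ge_atTop 1] with n hn hn1
    intro i hi
    obtain ⟨hi1, hiN⟩ := Finset.mem_Icc.mp hi
    have hx1 : (1 : ℝ) ≤ (i : ℝ) := by exact_mod_cast hi1
    have hxM : (i : ℝ) ≤ (N n : ℝ) := by exact_mod_cast hiN
    have hM1 : (1 : ℝ) ≤ (N n : ℝ) := by exact_mod_cast hn.1
    have hM0 : (0 : ℝ) < (N n : ℝ) := by linarith
    have hn0 : (0 : ℝ) < (n : ℝ) := by exact_mod_cast hn1
    have hx0 : (0 : ℝ) ≤ (i : ℝ) := by linarith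
    have hid : P.eval ((i : ℝ)) / (n : ℝ) - ((i : ℝ) / (N n : ℝ)) ^ q
        = (P.eval ((i : ℝ)) - a * (i : ℝ) ^ q) / (n : ℝ)
          + ((i : ℝ) / (N n : ℝ)) ^ q * (a * (N n : ℝ) ^ q / (n : ℝ) - 1) := by
      rw [div_pow]
      field_simp
      ring
    rw [hid]
    have hfrac01 : ((i : ℝ) / (N n : ℝ)) ^ q ≤ 1 :=
      pow_le_one₀ (by positivity) ((div_le_one hM0).mpr hxM)
    have hfrac0 : 0 ≤ ((i : ℝ) / (N n : ℝ)) ^ q := by positivity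
    calc |(P.eval ((i : ℝ)) - a * (i : ℝ) ^ q) / (n : ℝ)
          + ((i : ℝ) / (N n : ℝ)) ^ q * (a * (N n : ℝ) ^ q / (n : ℝ) - 1)|
        ≤ |(P.eval ((i : ℝ)) - a * (i : ℝ) ^ q) / (n : ℝ)|
          + |((i : ℝ) / (N n : ℝ)) ^ q * (a * (N n : ℝ) ^ q / (n : ℝ) - 1)| := abs_add_le _ _
      _ ≤ c * ((N n : ℝ) ^ (q - 1) / (n : ℝ)) + |a * (N n : ℝ) ^ q / (n : ℝ) - 1| := by
          apply add_le_add
          · have hb := hQbound (i : ℝ) hx1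
            have hmono : c * (i : ℝ) ^ (q - 1) ≤ c * (N n : ℝ) ^ (q - 1) :=
              mul_le_mul_of_nonneg_left (pow_le_pow_left₀ hx0 hxM _) hc0
            rw [abs_div, abs_of_pos hn0, div_le_iff₀ hn0]
            have hcalc : c * ((N n : ℝ) ^ (q - 1) / (n : ℝ)) * (n : ℝ)
                = c * (N n : ℝ) ^ (q - 1) := by field_simp
            rw [hcalc]
            exact le_trans hb hmono
          · rw [abs_mul, abs_of_nonneg hfrac0]
            calc ((i : ℝ) / (N n : ℝ)) ^ q * |a * (N n : ℝ) ^ q / (n : ℝ) - 1|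
                ≤ 1 * |a * (N n : ℝ) ^ q / (n : ℝ) - 1| :=
                  mul_le_mul_of_nonneg_right hfrac01 (abs_nonneg _)
              _ = _ := one_mul _
  -- Riemann sums converge
  have hR : Tendsto (fun n : ℕ =>
      (1 / (N n : ℝ)) * ∑ i ∈ Finset.Icc 1 (N n), f (((i : ℝ) / (N n : ℝ)) ^ q))
      atTop (𝓝 (∫ u in Set.Icc (0 : ℝ) 1, f (u ^ q))) :=
    (riemann_sum_tendsto (fun u => f (u ^ q)) (hf.comp (continuous_pow q))).comp hNtop
  -- difference tends to zero
  have hdiff : Tendsto (fun n : ℕ =>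
      (1 / (N n : ℝ)) * ∑ i ∈ Finset.Icc 1 (N n), f (P.eval ((i : ℝ)) / n)
        - (1 / (N n : ℝ)) * ∑ i ∈ Finset.Icc 1 (N n), f (((i : ℝ) / (N n : ℝ)) ^ q))
      atTop (𝓝 0) := by
    rw [NormedAddCommGroup.tendsto_nhds_zero]
    intro ε' hε'
    obtain ⟨δ, hδ0, hδ⟩ := Metric.uniformContinuousOn_iff.mp
      ((isCompact_Icc : IsCompact (Set.Icc (-2 : ℝ) 2)).uniformContinuousOn_of_continuous
        hf.continuousOn) (ε'/2) (by positivity)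
    have hEsmall : ∀ᶠ n : ℕ in atTop, E n < min δ 1 :=
      hEto0.eventually (eventually_lt_nhds (lt_min hδ0 one_pos))
    filter_upwards [hN, hkey, hEsmall] with n hn hk hsm
    have hM1 : (1 : ℝ) ≤ (N n : ℝ) := by exact_mod_cast hn.1
    have hM0 : (0 : ℝ) < (N n : ℝ) := by linarith
    have hterm : ∀ i ∈ Finset.Icc 1 (N n),
        |f (P.eval ((i : ℝ)) / n) - f (((i : ℝ) / (N n : ℝ)) ^ q)| ≤ ε' / 2 := by
      intro i hi
      obtain ⟨hi1, hiN⟩ := Finset.mem_Icc.mp hi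
      have hxM : (i : ℝ) ≤ (N n : ℝ) := by exact_mod_cast hiN
      have hx0 : (0 : ℝ) ≤ (i : ℝ) := by positivity
      set y : ℝ := ((i : ℝ) / (N n : ℝ)) ^ q with hy
      have hy0 : 0 ≤ y := by positivity
      have hy1 : y ≤ 1 := pow_le_one₀ (by positivity) ((div_le_one hM0).mpr hxM)
      have habs := hk i hi
      have habs' : |P.eval ((i : ℝ)) / (n : ℝ) - y| < min δ 1 := lt_of_le_of_lt habs hsm
      have hymem : y ∈ Set.Icc (-2 : ℝ) 2 := ⟨by linarith, by linarith⟩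
      have hxmem : P.eval ((i : ℝ)) / (n : ℝ) ∈ Set.Icc (-2 : ℝ) 2 := by
        have h1 := abs_lt.mp (lt_of_lt_of_le habs' (min_le_right _ _))
        constructor <;> [linarith [h1.1]; linarith [h1.2]]
      have hdist : dist (P.eval ((i : ℝ)) / (n : ℝ)) y < δ := by
        rw [Real.dist_eq]
        exact lt_of_lt_of_le habs' (min_le_left _ _)
      have := hδ _ hxmem _ hymem hdist
      rw [Real.dist_eq] at this
      exact this.le
    rw [← mul_sub, ← Finset.sum_sub_distrib, Real.norm_eq_abs, abs_mul,
      abs_of_pos (by positivity : (0:ℝ) < 1 / (N n : ℝ))]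
    calc (1 / (N n : ℝ)) * |∑ i ∈ Finset.Icc 1 (N n),
          (f (P.eval ((i : ℝ)) / n) - f (((i : ℝ) / (N n : ℝ)) ^ q))|
        ≤ (1 / (N n : ℝ)) * ∑ i ∈ Finset.Icc 1 (N n),
          |f (P.eval ((i : ℝ)) / n) - f (((i : ℝ) / (N n : ℝ)) ^ q)| := by
          apply mul_le_mul_of_nonneg_left (Finset.abs_sum_le_sum_abs _ _) (by positivity)
      _ ≤ (1 / (N n : ℝ)) * ∑ _i ∈ Finset.Icc 1 (N n), (ε' / 2) :=
          mul_le_mul_of_nonneg_left (Finset.sum_le_sum hterm) (by positivity)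
      _ = (1 / (N n : ℝ)) * ((N n : ℝ) * (ε' / 2)) := by
          rw [Finset.sum_const, Nat.card_Icc, nsmul_eq_mul]
          norm_num
      _ = ε' / 2 := by field_simp
      _ < ε' := by linarith
  have hfinal := hdiff.add hR
  rw [zero_add] at hfinal
  refine hfinal.congr (fun n => ?_)
  ring
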